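/- Let ε ∈ (0,1), β ∈ (0,1) and let d ≥ 1 be an integer. If N is a natural number satisfying N ≥ (e/(ε(e−1)))·(ln(1/β) + d − 1), where e is Euler's number, then the binomial tail satisfies ∑_{i=0}^{d−1} (N choose i) ε^i (1−ε)^{N−i} ≤ β. -/
import Mathlib


/-- Explicit sufficient sample-size bound for the scenario-with-certificates
approach: if `N ≥ (e/(ε(e−1)))·(ln(1/β) + d − 1)` then the binomial tail
`∑_{i=0}^{d−1} (N choose i) ε^i (1−ε)^{N−i}` is at most `β`. -/
theorem scenario_sample_size_bound
    (ε β : ℝ) (hε : ε ∈ Set.Ioo (0 : ℝ) 1) (hβ : β ∈ Set.Ioo (0 : ℝ) 1)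
    (d : ℕ) (hd : 1 ≤ d) (N : ℕ)
    (hN : (Real.exp 1 / (ε * (Real.exp 1 - 1))) * (Real.log (1 / β) + d - 1) ≤ N) :
    ∑ i ∈ Finset.range d, (N.choose i : ℝ) * ε ^ i * (1 - ε) ^ (N - i) ≤ β := by
  obtain ⟨hε0, hε1⟩ := hε
  obtain ⟨hβ0, hβ1⟩ := hβ
  set E : ℝ := Real.exp 1 with hE
  have hE1 : 1 < E := by
    have := Real.add_one_le_exp (1 : ℝ)
    nlinarith
  have hE0 : 0 < E := by linarith
  set c : ℝ := ε * (1 - E⁻¹) with hc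
  have hc0 : 0 < c := by
    have : E⁻¹ < 1 := by
      rw [inv_lt_one_iff₀]; right; exact hE1
    nlinarith
  have hc1 : c < 1 := by
    have h1 : 0 < E⁻¹ := by positivity
    nlinarith
  -- term-wise bound
  have hε' : (0:ℝ) < 1 - ε := by linarith
  have step1 : ∑ i ∈ Finset.range d, (N.choose i : ℝ) * ε ^ i * (1 - ε) ^ (N - i)
      ≤ E ^ (d - 1) * ∑ i ∈ Finset.range d,
        (N.choose i : ℝ) * (ε / E) ^ i * (1 - ε) ^ (N - i) := by
    rw [Finset.mul_sum]
    apply Finset.sum_le_sum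
    intro i hi
    have hid : i ≤ d - 1 := Nat.le_sub_one_of_lt (Finset.mem_range.mp hi)
    have hEi : E ^ i ≤ E ^ (d - 1) := pow_le_pow_right₀ (le_of_lt hE1) hid
    have hterm : (N.choose i : ℝ) * (ε / E) ^ i * (1 - ε) ^ (N - i) * E ^ i
        = (N.choose i : ℝ) * ε ^ i * (1 - ε) ^ (N - i) := by
      rw [div_pow]
      field_simp
    have hnn : (0:ℝ) ≤ (N.choose i : ℝ) * (ε / E) ^ i * (1 - ε) ^ (N - i) := by
      positivity
    calc (N.choose i : ℝ) * ε ^ i * (1 - ε) ^ (N - i)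
        = (N.choose i : ℝ) * (ε / E) ^ i * (1 - ε) ^ (N - i) * E ^ i := hterm.symm
      _ ≤ (N.choose i : ℝ) * (ε / E) ^ i * (1 - ε) ^ (N - i) * E ^ (d-1) := by
          exact mul_le_mul_of_nonneg_left hEi hnn
      _ = E ^ (d-1) * ((N.choose i : ℝ) * (ε / E) ^ i * (1 - ε) ^ (N - i)) := by ring
  -- binomial theorem bound
  have step2 : ∑ i ∈ Finset.range d,
      (N.choose i : ℝ) * (ε / E) ^ i * (1 - ε) ^ (N - i) ≤ (ε / E + (1 - ε)) ^ N := by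
    have hbin : (ε / E + (1 - ε)) ^ N
        = ∑ i ∈ Finset.range (N + 1), (ε / E) ^ i * (1 - ε) ^ (N - i) * (N.choose i : ℝ) :=
      add_pow (ε / E) (1 - ε) N
    set M := max d (N + 1) with hM
    have h1 : ∑ i ∈ Finset.range d,
        (N.choose i : ℝ) * (ε / E) ^ i * (1 - ε) ^ (N - i)
        ≤ ∑ i ∈ Finset.range M,
        (N.choose i : ℝ) * (ε / E) ^ i * (1 - ε) ^ (N - i) := by
      apply Finset.sum_le_sum_of_subset_of_nonneg
      · exact Finset.range_subset_range.mpr (le_max_left _ _)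
      · intro i _ _; positivity
    have h2 : ∑ i ∈ Finset.range M,
        (N.choose i : ℝ) * (ε / E) ^ i * (1 - ε) ^ (N - i)
        = ∑ i ∈ Finset.range (N + 1),
        (N.choose i : ℝ) * (ε / E) ^ i * (1 - ε) ^ (N - i) := by
      symm
      apply Finset.sum_subset (Finset.range_subset_range.mpr (le_max_right _ _))
      intro i _ hi
      have : N < i := by
        have := Finset.mem_range.not.mp hi
        omega
      rw [Nat.choose_eq_zero_of_lt this]
      simp
    calc _ ≤ _ := h1
      _ = ∑ i ∈ Finset.range (N + 1),
          (N.choose i : ℝ) * (ε / E) ^ i * (1 - ε) ^ (N - i) := h2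
      _ = (ε / E + (1 - ε)) ^ N := by rw [hbin]; apply Finset.sum_congr rfl; intros; ring
  have heq : ε / E + (1 - ε) = 1 - c := by
    rw [hc]; field_simp; ring
  -- (1-c)^N ≤ exp(-c)^N = exp(-cN)
  have step3 : (1 - c) ^ N ≤ Real.exp (-(c * N)) := by
    have h1 : 1 - c ≤ Real.exp (-c) := by
      have := Real.add_one_le_exp (-c)
      linarith
    calc (1 - c) ^ N ≤ (Real.exp (-c)) ^ N :=
          pow_le_pow_left₀ (by linarith) h1 N
      _ = Real.exp (-(c * N)) := by
          rw [← Real.exp_nat_mul]; ring_nf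
  -- E^(d-1) = exp (d-1)
  have hEd : E ^ (d - 1) = Real.exp ((d : ℝ) - 1) := by
    rw [hE, ← Real.exp_nat_mul, mul_one]
    congr 1
    have := Nat.cast_sub hd (R := ℝ)
    rw [this]; simp
  -- from hN : (d:ℝ) - 1 - c * N ≤ log β
  have hlog : (d : ℝ) - 1 - c * N ≤ Real.log β := by
    have hceq : Real.exp 1 / (ε * (Real.exp 1 - 1)) = c⁻¹ := by
      rw [hc, hE]
      field_simp
    rw [hceq] at hN
    have hL : Real.log (1 / β) + d - 1 ≤ c * N := by
      have := mul_le_mul_of_nonneg_left hN (le_of_lt hc0)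
      rw [mul_inv_cancel_left₀ (ne_of_gt hc0)] at this
      linarith
    rw [one_div, Real.log_inv] at hL
    linarith
  -- put everything together
  have hfinal : E ^ (d - 1) * (ε / E + (1 - ε)) ^ N ≤ β := by
    rw [heq, hEd]
    calc Real.exp ((d : ℝ) - 1) * (1 - c) ^ N
        ≤ Real.exp ((d : ℝ) - 1) * Real.exp (-(c * N)) := by
          apply mul_le_mul_of_nonneg_left step3 (le_of_lt (Real.exp_pos _))
      _ = Real.exp ((d : ℝ) - 1 - c * N) := by rw [← Real.exp_add]; ring_nf
      _ ≤ Real.exp (Real.log β) := Real.exp_le_exp.mpr hlog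
      _ = β := Real.exp_log hβ0
  calc ∑ i ∈ Finset.range d, (N.choose i : ℝ) * ε ^ i * (1 - ε) ^ (N - i)
      ≤ E ^ (d - 1) * ∑ i ∈ Finset.range d,
        (N.choose i : ℝ) * (ε / E) ^ i * (1 - ε) ^ (N - i) := step1
    _ ≤ E ^ (d - 1) * (ε / E + (1 - ε)) ^ N :=
        mul_le_mul_of_nonneg_left step2 (by positivity)
    _ ≤ β := hfinal
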